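/- For any leader strategy S ⊆ L in the pairwise (K=2) Stackelberg KEP game, there exists a strategy S* ⊆ L with G[S*] admitting a perfect matching such that w(G[S*]) + w^L(G[V\S*]) ≥ w(G[S]) + w^L(G[V\S]). -/

import Mathlib

variable {V : Type*} [Fintype V] [DecidableEq V]

/-- A matching of `G` all of whose edges lie inside the vertex set `W`
(i.e. a matching of the induced subgraph `G[W]`). -/
def IsMatchingOn (G : SimpleGraph V) (W : Set V) (M : Finset (Sym2 V)) : Prop :=
  (∀ e ∈ M, e ∈ G.edgeSet) ∧ (∀ e ∈ M, ∀ v ∈ e, v ∈ W) ∧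
  (M : Set (Sym2 V)).Pairwise fun e f => ∀ v, v ∈ e → v ∉ f

/-- Vertices covered by a set of edges. -/
def mcovered (M : Finset (Sym2 V)) : Set V := {v | ∃ e ∈ M, v ∈ e}

/-- `w(G[W])`: maximum cardinality of a matching of `G[W]`. -/
noncomputable def mmax (G : SimpleGraph V) (W : Set V) : ℕ :=
  sSup {n | ∃ M, IsMatchingOn G W M ∧ M.card = n}

/-- `w^L(G[W])`: minimum number of `L`-vertices covered over maximum matchings of `G[W]`. -/
noncomputable def mwL (G : SimpleGraph V) (L W : Set V) : ℕ :=
  sInf {k | ∃ M, IsMatchingOn G W M ∧ M.card = mmax G W ∧ (mcovered M ∩ L).ncard = k}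

/-! ### Auxiliary machinery -/

/-- A plain matching (pairwise vertex-disjoint set of edges). -/
def IsM (M : Finset (Sym2 V)) : Prop :=
  (M : Set (Sym2 V)).Pairwise fun e f => ∀ v, v ∈ e → v ∉ f

lemma IsM.subset {M M' : Finset (Sym2 V)} (hM : IsM M) (h : M' ⊆ M) : IsM M' :=
  Set.Pairwise.mono (Finset.coe_subset.2 h) hM

lemma edge_unique {M : Finset (Sym2 V)} (hM : IsM M) {e f : Sym2 V} {v : V}
    (he : e ∈ M) (hf : f ∈ M) (hve : v ∈ e) (hvf : v ∈ f) : e = f := by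
  by_contra hne
  exact hM (Finset.mem_coe.2 he) (Finset.mem_coe.2 hf) hne v hve hvf

lemma not_cov_erase {M : Finset (Sym2 V)} (hM : IsM M) {e : Sym2 V} {v : V}
    (he : e ∈ M) (hv : v ∈ e) : v ∉ mcovered (M.erase e) := by
  rintro ⟨f, hf, hvf⟩
  exact Finset.ne_of_mem_erase hf (edge_unique hM (Finset.mem_of_mem_erase hf) he hvf hv)

lemma mcovered_mono {M M' : Finset (Sym2 V)} (h : M ⊆ M') : mcovered M ⊆ mcovered M' := by
  rintro v ⟨e, he, hv⟩
  exact ⟨e, h he, hv⟩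

lemma mcovered_union_of_subset {Q N P : Finset (Sym2 V)}
    (h : ↑Q ⊆ (↑N ∪ ↑P : Set (Sym2 V))) :
    mcovered Q ⊆ mcovered N ∪ mcovered P := by
  rintro v ⟨e, he, hv⟩
  rcases h (Finset.mem_coe.2 he) with h' | h'
  · exact Or.inl ⟨e, Finset.mem_coe.1 h', hv⟩
  · exact Or.inr ⟨e, Finset.mem_coe.1 h', hv⟩

lemma isM_insert {M : Finset (Sym2 V)} (hM : IsM M) {e : Sym2 V}
    (h : ∀ v ∈ e, v ∉ mcovered M) : IsM (insert e M) := by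
  intro a ha b hb hab
  simp only [Finset.coe_insert, Set.mem_insert_iff, Finset.mem_coe] at ha hb
  rcases ha with rfl | ha
  · rcases hb with rfl | hb
    · exact absurd rfl hab
    · exact fun w hwa hwb => h w hwa ⟨b, hb, hwb⟩
  · rcases hb with rfl | hb
    · exact fun w hwa hwb => h w hwb ⟨a, ha, hwa⟩
    · exact hM (Finset.mem_coe.2 ha) (Finset.mem_coe.2 hb) hab

/-- Key exchange lemma (alternating path argument).  Given matchings `N` and `P` (without
loops) and a vertex `u` covered by `N` but not by `P`, either there is a matching of size
`P.card + 1` inside `N ∪ P`, or there is a matching of size `N.card` avoiding `u` whose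
covered set is contained in `(mcovered N \ {u}) ∪ {z}` for some `z` covered by `P`. -/
lemma key_exchange (P : Finset (Sym2 V)) :
    ∀ N : Finset (Sym2 V), IsM N → IsM P →
    (∀ e ∈ N, ¬ e.IsDiag) → (∀ e ∈ P, ¬ e.IsDiag) →
    ∀ u, u ∈ mcovered N → u ∉ mcovered P →
    ∃ Q : Finset (Sym2 V), IsM Q ∧ ↑Q ⊆ (↑N ∪ ↑P : Set (Sym2 V)) ∧
      (Q.card = P.card + 1 ∨
       (Q.card = N.card ∧ u ∉ mcovered Q ∧
         ∃ z ∈ mcovered P, mcovered Q ⊆ (mcovered N \ {u}) ∪ {z})) := by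
  induction P using Finset.strongInduction with
  | _ P ih =>
    intro N hN hP hNd hPd u huN huP
    obtain ⟨e, heN, hue⟩ := huN
    obtain ⟨v, rfl⟩ := Sym2.mem_iff_exists.1 hue
    have huv : u ≠ v := fun h => hNd _ heN (Sym2.mk_isDiag_iff.2 h)
    by_cases hvP : v ∈ mcovered P
    · obtain ⟨f, hfP, hvf⟩ := hvP
      obtain ⟨x, rfl⟩ := Sym2.mem_iff_exists.1 hvf
      have hvx : v ≠ x := fun h => hPd _ hfP (Sym2.mk_isDiag_iff.2 h)
      have hxu : x ≠ u := fun h => huP ⟨s(v, x), hfP, h ▸ Sym2.mem_mk_right v x⟩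
      have hu_not_N1 : u ∉ mcovered (N.erase s(u, v)) := not_cov_erase hN heN hue
      have hv_not_N1 : v ∉ mcovered (N.erase s(u, v)) :=
        not_cov_erase hN heN (Sym2.mem_mk_right u v)
      have hv_not_P1 : v ∉ mcovered (P.erase s(v, x)) :=
        not_cov_erase hP hfP (Sym2.mem_mk_left v x)
      by_cases hxN : x ∈ mcovered N
      · -- recurse on the shorter matchings
        have hx_N1 : x ∈ mcovered (N.erase s(u, v)) := by
          obtain ⟨g, hgN, hxg⟩ := hxN
          refine ⟨g, Finset.mem_erase.2 ⟨?_, hgN⟩, hxg⟩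
          rintro rfl
          rcases Sym2.mem_iff.1 hxg with h | h
          exacts [hxu h, hvx h.symm]
        have hx_P1 : x ∉ mcovered (P.erase s(v, x)) :=
          not_cov_erase hP hfP (Sym2.mem_mk_right v x)
        obtain ⟨Q₁, hQ₁M, hQ₁sub, hQ₁alt⟩ :=
          ih _ (Finset.erase_ssubset hfP) (N.erase s(u, v))
            (hN.subset (Finset.erase_subset _ _)) (hP.subset (Finset.erase_subset _ _))
            (fun g hg => hNd g (Finset.mem_of_mem_erase hg))
            (fun g hg => hPd g (Finset.mem_of_mem_erase hg))
            x hx_N1 hx_P1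
        have hsubNP : (↑(N.erase s(u, v)) ∪ ↑(P.erase s(v, x)) : Set (Sym2 V)) ⊆ ↑N ∪ ↑P :=
          Set.union_subset_union (Finset.coe_subset.2 (Finset.erase_subset _ _))
            (Finset.coe_subset.2 (Finset.erase_subset _ _))
        rcases hQ₁alt with hc | ⟨hc, hxQ₁, z, hzP1, hcov⟩
        · -- augmenting branch: extend with the N-edge s(u,v)
          have hQ₁cov := mcovered_union_of_subset hQ₁sub
          have huQ₁ : u ∉ mcovered Q₁ := fun h => by
            rcases hQ₁cov h with h' | h'
            · exact hu_not_N1 h'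
            · exact huP (mcovered_mono (Finset.erase_subset _ _) h')
          have hvQ₁ : v ∉ mcovered Q₁ := fun h => by
            rcases hQ₁cov h with h' | h'
            · exact hv_not_N1 h'
            · exact hv_not_P1 h'
          refine ⟨insert s(u, v) Q₁, isM_insert hQ₁M ?_, ?_, Or.inl ?_⟩
          · intro w hw hwQ₁
            rcases Sym2.mem_iff.1 hw with rfl | rfl
            · exact huQ₁ hwQ₁
            · exact hvQ₁ hwQ₁
          · rw [Finset.coe_insert]
            exact Set.insert_subset (Or.inl (Finset.mem_coe.2 heN)) (hQ₁sub.trans hsubNP)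
          · have hne : s(u, v) ∉ Q₁ := fun hmem => huQ₁ ⟨_, hmem, Sym2.mem_mk_left u v⟩
            have hpos : 0 < P.card := Finset.card_pos.2 ⟨_, hfP⟩
            rw [Finset.card_insert_of_notMem hne, hc, Finset.card_erase_of_mem hfP]
            omega
        · -- flip branch: extend with the P-edge s(v,x)
          have hz : z ∈ mcovered P := mcovered_mono (Finset.erase_subset _ _) hzP1
          have hvz : v ≠ z := fun h => hv_not_P1 (h ▸ hzP1)
          have huz : u ≠ z := fun h => huP (h ▸ hz)
          have hvQ₁ : v ∉ mcovered Q₁ := fun h => by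
            rcases hcov h with h' | h'
            · exact hv_not_N1 h'.1
            · exact hvz (Set.mem_singleton_iff.1 h')
          have huQ₁ : u ∉ mcovered Q₁ := fun h => by
            rcases hcov h with h' | h'
            · exact hu_not_N1 h'.1
            · exact huz (Set.mem_singleton_iff.1 h')
          refine ⟨insert s(v, x) Q₁, isM_insert hQ₁M ?_, ?_, Or.inr ⟨?_, ?_, z, hz, ?_⟩⟩
          · intro w hw hwQ₁
            rcases Sym2.mem_iff.1 hw with rfl | rfl
            · exact hvQ₁ hwQ₁
            · exact hxQ₁ hwQ₁
          · rw [Finset.coe_insert]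
            exact Set.insert_subset (Or.inr (Finset.mem_coe.2 hfP)) (hQ₁sub.trans hsubNP)
          · have hne : s(v, x) ∉ Q₁ := fun hmem => hxQ₁ ⟨_, hmem, Sym2.mem_mk_right v x⟩
            have hpos : 0 < N.card := Finset.card_pos.2 ⟨_, heN⟩
            rw [Finset.card_insert_of_notMem hne, hc, Finset.card_erase_of_mem heN]
            omega
          · rintro ⟨g, hg, hug⟩
            rcases Finset.mem_insert.1 hg with rfl | hg'
            · rcases Sym2.mem_iff.1 hug with h | h
              exacts [huv h, hxu h.symm]
            · exact huQ₁ ⟨g, hg', hug⟩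
          · rintro w ⟨g, hg, hwg⟩
            rcases Finset.mem_insert.1 hg with rfl | hg'
            · rcases Sym2.mem_iff.1 hwg with h | h
              · rw [h]
                exact Or.inl ⟨⟨_, heN, Sym2.mem_mk_right u v⟩,
                  fun hc => huv (Set.mem_singleton_iff.1 hc).symm⟩
              · rw [h]
                exact Or.inl ⟨hxN, fun hc => hxu (Set.mem_singleton_iff.1 hc)⟩
            · rcases hcov ⟨g, hg', hwg⟩ with h | h
              · refine Or.inl ⟨mcovered_mono (Finset.erase_subset _ _) h.1, fun hw => ?_⟩
                rw [Set.mem_singleton_iff] at hw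
                rw [hw] at h
                exact hu_not_N1 h.1
              · exact Or.inr h
      · -- base swap case: replace s(u,v) by s(v,x)
        refine ⟨insert s(v, x) (N.erase s(u, v)),
          isM_insert (hN.subset (Finset.erase_subset _ _)) ?_, ?_,
          Or.inr ⟨?_, ?_, x, ⟨_, hfP, Sym2.mem_mk_right v x⟩, ?_⟩⟩
        · intro w hw hwN1
          rcases Sym2.mem_iff.1 hw with rfl | rfl
          · exact hv_not_N1 hwN1
          · exact hxN (mcovered_mono (Finset.erase_subset _ _) hwN1)
        · rw [Finset.coe_insert]
          refine Set.insert_subset (Or.inr (Finset.mem_coe.2 hfP)) ?_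
          exact fun g hg => Or.inl (Finset.mem_coe.2 (Finset.mem_of_mem_erase
            (Finset.mem_coe.1 hg)))
        · have hne : s(v, x) ∉ N.erase s(u, v) := fun hmem =>
            hxN ⟨_, Finset.mem_of_mem_erase hmem, Sym2.mem_mk_right v x⟩
          have hpos : 0 < N.card := Finset.card_pos.2 ⟨_, heN⟩
          rw [Finset.card_insert_of_notMem hne, Finset.card_erase_of_mem heN]
          omega
        · rintro ⟨g, hg, hug⟩
          rcases Finset.mem_insert.1 hg with rfl | hg'
          · rcases Sym2.mem_iff.1 hug with h | h
            exacts [huv h, hxu h.symm]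
          · exact hu_not_N1 ⟨g, hg', hug⟩
        · rintro w ⟨g, hg, hwg⟩
          rcases Finset.mem_insert.1 hg with rfl | hg'
          · rcases Sym2.mem_iff.1 hwg with h | h
            · rw [h]
              exact Or.inl ⟨⟨_, heN, Sym2.mem_mk_right u v⟩,
                fun hc => huv (Set.mem_singleton_iff.1 hc).symm⟩
            · rw [h]
              exact Or.inr rfl
          · refine Or.inl ⟨mcovered_mono (Finset.erase_subset _ _) ⟨g, hg', hwg⟩,
              fun hw => ?_⟩
            rw [Set.mem_singleton_iff] at hw
            rw [hw] at hwg
            exact hu_not_N1 ⟨g, hg', hwg⟩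
    · -- v is uncovered by P: s(u,v) augments P
      refine ⟨insert s(u, v) P, isM_insert hP ?_, ?_, Or.inl ?_⟩
      · intro w hw hwP
        rcases Sym2.mem_iff.1 hw with rfl | rfl
        · exact huP hwP
        · exact hvP hwP
      · rw [Finset.coe_insert]
        exact Set.insert_subset (Or.inl (Finset.mem_coe.2 heN)) Set.subset_union_right
      · exact Finset.card_insert_of_notMem (fun hmem => huP ⟨_, hmem, Sym2.mem_mk_left u v⟩)

/-! ### Basic facts about `mmax` and `mwL` -/

lemma isMatchingOn_empty (G : SimpleGraph V) (W : Set V) :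
    IsMatchingOn G W (∅ : Finset (Sym2 V)) :=
  ⟨fun e he => absurd he (Finset.notMem_empty e),
   fun e he => absurd he (Finset.notMem_empty e), by simp⟩

lemma bddAbove_matchings (G : SimpleGraph V) (W : Set V) :
    BddAbove {n | ∃ M, IsMatchingOn G W M ∧ M.card = n} := by
  refine ⟨Fintype.card (Sym2 V), ?_⟩
  rintro n ⟨M, _, rfl⟩
  exact (Finset.card_le_univ M).trans_eq Finset.card_univ

lemma le_mmax {G : SimpleGraph V} {W : Set V} {M : Finset (Sym2 V)}
    (h : IsMatchingOn G W M) : M.card ≤ mmax G W :=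
  le_csSup (bddAbove_matchings G W) ⟨M, h, rfl⟩

lemma mmax_spec (G : SimpleGraph V) (W : Set V) :
    ∃ M, IsMatchingOn G W M ∧ M.card = mmax G W := by
  have hne : {n | ∃ M, IsMatchingOn G W M ∧ M.card = n}.Nonempty :=
    ⟨0, ∅, isMatchingOn_empty G W, rfl⟩
  exact Nat.sSup_mem hne (bddAbove_matchings G W)

lemma mwL_spec (G : SimpleGraph V) (L W : Set V) :
    ∃ M, IsMatchingOn G W M ∧ M.card = mmax G W ∧ (mcovered M ∩ L).ncard = mwL G L W := by
  have hne : {k | ∃ M, IsMatchingOn G W M ∧ M.card = mmax G W ∧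
      (mcovered M ∩ L).ncard = k}.Nonempty := by
    obtain ⟨M, h1, h2⟩ := mmax_spec G W
    exact ⟨_, M, h1, h2, rfl⟩
  exact Nat.sInf_mem hne

lemma mwL_le {G : SimpleGraph V} {L W : Set V} {M : Finset (Sym2 V)}
    (h1 : IsMatchingOn G W M) (h2 : M.card = mmax G W) :
    mwL G L W ≤ (mcovered M ∩ L).ncard :=
  Nat.sInf_le ⟨M, h1, h2, rfl⟩

lemma IsMatchingOn.mono {G : SimpleGraph V} {W W' : Set V} {M : Finset (Sym2 V)}
    (h : IsMatchingOn G W M) (hW : W ⊆ W') : IsMatchingOn G W' M :=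
  ⟨h.1, fun e he v hv => hW (h.2.1 e he v hv), h.2.2⟩

/-- Adding a single leader vertex to the pool cannot decrease `w^L`. -/
lemma mwL_le_insert (G : SimpleGraph V) (L W : Set V) (u : V) (huL : u ∈ L) (huW : u ∉ W) :
    mwL G L W ≤ mwL G L (W ∪ {u}) := by
  obtain ⟨N, hN, hNcard, hNcov⟩ := mwL_spec G L (W ∪ {u})
  have hcovN : mcovered N ⊆ W ∪ {u} := by
    rintro w ⟨e, he, hw⟩; exact hN.2.1 e he w hw
  by_cases huN : u ∈ mcovered N
  · obtain ⟨P, hP, hPcard⟩ := mmax_spec G W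
    have hcovP : mcovered P ⊆ W := by
      rintro w ⟨e, he, hw⟩; exact hP.2.1 e he w hw
    have huP : u ∉ mcovered P := fun h => huW (hcovP h)
    obtain ⟨Q, hQM, hQsub, hQalt⟩ :=
      key_exchange P N hN.2.2 hP.2.2
        (fun e he => G.not_isDiag_of_mem_edgeSet (hN.1 e he))
        (fun e he => G.not_isDiag_of_mem_edgeSet (hP.1 e he))
        u huN huP
    have hQG : ∀ e ∈ Q, e ∈ G.edgeSet := fun e he =>
      (hQsub (Finset.mem_coe.2 he)).elim (fun h => hN.1 e (Finset.mem_coe.1 h))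
        (fun h => hP.1 e (Finset.mem_coe.1 h))
    have hPmax' : P.card ≤ mmax G (W ∪ {u}) := le_mmax (hP.mono Set.subset_union_left)
    rcases hQalt with hc | ⟨hc, huQ, z, hzP, hQcov⟩
    · -- Q augments: the maximum of W ∪ {u} is one larger than that of W
      have hQon : IsMatchingOn G (W ∪ {u}) Q := by
        refine ⟨hQG, fun e he v hv => ?_, hQM⟩
        rcases mcovered_union_of_subset hQsub ⟨e, he, hv⟩ with h | h
        · exact hcovN h
        · exact Or.inl (hcovP h)
      have h1 : P.card + 1 ≤ mmax G (W ∪ {u}) := hc ▸ le_mmax hQon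
      obtain ⟨e, heN, hue⟩ := huN
      have hN' : IsMatchingOn G W (N.erase e) := by
        refine ⟨fun g hg => hN.1 g (Finset.mem_of_mem_erase hg), ?_,
          hN.2.2.mono (Finset.coe_subset.2 (Finset.erase_subset _ _))⟩
        intro g hg w hw
        rcases hN.2.1 g (Finset.mem_of_mem_erase hg) w hw with h | h
        · exact h
        · have hwu : w = u := Set.mem_singleton_iff.1 h
          subst hwu
          exact absurd ⟨g, hg, hw⟩ (not_cov_erase hN.2.2 heN hue)
      have h2 : (N.erase e).card ≤ mmax G W := le_mmax hN'
      have h3 : (N.erase e).card = N.card - 1 := Finset.card_erase_of_mem heN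
      have hpos : 0 < N.card := Finset.card_pos.2 ⟨_, heN⟩
      have hcard' : (N.erase e).card = mmax G W := by omega
      refine (mwL_le hN' hcard').trans ?_
      refine (Set.ncard_le_ncard ?_ (Set.toFinite _)).trans_eq hNcov
      exact Set.inter_subset_inter_left L (mcovered_mono (Finset.erase_subset _ _))
    · -- Q is a maximum matching of W with no more covered leader vertices
      have hQcovW : mcovered Q ⊆ W := by
        intro w hw
        rcases hQcov hw with h | h
        · rcases hcovN h.1 with h' | h'
          · exact h'
          · exact absurd h' h.2
        · exact hcovP ((Set.mem_singleton_iff.1 h) ▸ hzP)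
      have hQon : IsMatchingOn G W Q := ⟨hQG, fun e he v hv => hQcovW ⟨e, he, hv⟩, hQM⟩
      have hQmax : Q.card = mmax G W := le_antisymm (le_mmax hQon) (by omega)
      refine (mwL_le hQon hQmax).trans ?_
      have hu' : u ∈ mcovered N ∩ L := ⟨huN, huL⟩
      have h5 : mcovered Q ∩ L ⊆ ((mcovered N ∩ L) \ {u}) ∪ {z} := by
        rintro w ⟨hwQ, hwL⟩
        rcases hQcov hwQ with h | h
        · exact Or.inl ⟨⟨h.1, hwL⟩, h.2⟩
        · exact Or.inr h
      have h6 : (mcovered Q ∩ L).ncard ≤ (((mcovered N ∩ L) \ {u}) ∪ {z}).ncard :=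
        Set.ncard_le_ncard h5 (Set.toFinite _)
      have h7 : (((mcovered N ∩ L) \ {u}) ∪ {z}).ncard ≤ ((mcovered N ∩ L) \ {u}).ncard + 1 := by
        rw [Set.union_singleton]
        exact Set.ncard_insert_le _ _
      have h8 : ((mcovered N ∩ L) \ {u}).ncard = (mcovered N ∩ L).ncard - 1 :=
        Set.ncard_diff_singleton_of_mem hu'
      have hpos : 0 < (mcovered N ∩ L).ncard :=
        (Set.ncard_pos (Set.toFinite _)).2 ⟨u, hu'⟩
      omega
  · -- u is not covered by N : N itself is a maximum matching of W
    have hNon : IsMatchingOn G W N := by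
      refine ⟨hN.1, ?_, hN.2.2⟩
      intro e he v hv
      rcases hN.2.1 e he v hv with h | h
      · exact h
      · have hvu : v = u := Set.mem_singleton_iff.1 h
        subst hvu
        exact absurd ⟨e, he, hv⟩ huN
    have hNmax : N.card = mmax G W := by
      obtain ⟨P, hP, hPc⟩ := mmax_spec G W
      have h1 : N.card ≤ mmax G W := le_mmax hNon
      have h2 : P.card ≤ mmax G (W ∪ {u}) := le_mmax (hP.mono Set.subset_union_left)
      omega
    exact (mwL_le hNon hNmax).trans_eq hNcov

/-- Adding a finite set of leader vertices to the pool cannot decrease `w^L`. -/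
lemma mwL_le_union (G : SimpleGraph V) (L W : Set V) (U : Finset V) :
    ↑U ⊆ L → (∀ u ∈ U, u ∉ W) → mwL G L W ≤ mwL G L (W ∪ ↑U) := by
  induction U using Finset.induction_on with
  | empty => intro _ _; simp
  | @insert a U' haU' ih =>
    intro hUL hUW
    have h1 := ih (fun x hx => hUL (Finset.mem_insert_of_mem hx))
      (fun u hu => hUW u (Finset.mem_insert_of_mem hu))
    have h2 : mwL G L (W ∪ ↑U') ≤ mwL G L ((W ∪ ↑U') ∪ {a}) := by
      refine mwL_le_insert G L (W ∪ ↑U') a (hUL (Finset.mem_insert_self a U')) ?_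
      rintro (h | h)
      · exact hUW a (Finset.mem_insert_self a U') h
      · exact haU' (Finset.mem_coe.1 h)
    have h3 : (W ∪ ↑U') ∪ {a} = W ∪ ↑(insert a U') := by
      rw [Finset.coe_insert]
      ext x
      simp only [Set.mem_union, Set.mem_singleton_iff, Set.mem_insert_iff, Finset.mem_coe]
      tauto
    exact h1.trans (h3 ▸ h2)

/-- for any leader strategy `S ⊆ L` there is a strategy `S*` on which the
leader has a perfect (internal) matching and whose guaranteed value is at least as large. -/
theorem stmt17 (G : SimpleGraph V) (L F : Set V)
    (hpart : L ∪ F = Set.univ) (hdisj : Disjoint L F)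
    (S : Set V) (hS : S ⊆ L) :
    ∃ Sstar : Set V, Sstar ⊆ L ∧
      (∃ M, IsMatchingOn G Sstar M ∧ ∀ v ∈ Sstar, v ∈ mcovered M) ∧
      mmax G S + mwL G L Sᶜ ≤ mmax G Sstar + mwL G L Sstarᶜ := by
  obtain ⟨M₀, hM₀, hM₀card⟩ := mmax_spec G S
  have hcovS : mcovered M₀ ⊆ S := by
    rintro v ⟨e, he, hv⟩; exact hM₀.2.1 e he v hv
  have hM₀' : IsMatchingOn G (mcovered M₀) M₀ :=
    ⟨hM₀.1, fun e he v hv => ⟨e, he, hv⟩, hM₀.2.2⟩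
  refine ⟨mcovered M₀, fun v hv => hS (hcovS hv), ⟨M₀, hM₀', fun v hv => hv⟩, ?_⟩
  have h1 : mmax G S ≤ mmax G (mcovered M₀) := by
    rw [← hM₀card]
    exact le_mmax hM₀'
  have hUfin : (S \ mcovered M₀).Finite := Set.toFinite _
  have h2 : mwL G L Sᶜ ≤ mwL G L (Sᶜ ∪ ↑hUfin.toFinset) := by
    apply mwL_le_union
    · rw [Set.Finite.coe_toFinset]
      exact fun x hx => hS hx.1
    · intro u hu
      rw [Set.Finite.mem_toFinset] at hu
      exact fun hc => hc hu.1
  have h3 : Sᶜ ∪ ↑hUfin.toFinset = (mcovered M₀)ᶜ := by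
    rw [Set.Finite.coe_toFinset]
    ext x
    simp only [Set.mem_union, Set.mem_compl_iff, Set.mem_diff]
    constructor
    · rintro (h | ⟨_, h⟩)
      · exact fun hx => h (hcovS hx)
      · exact h
    · intro h
      by_cases hxS : x ∈ S
      · exact Or.inr ⟨hxS, h⟩
      · exact Or.inl hxS
  rw [h3] at h2
  exact Nat.add_le_add h1 h2
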